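/- Let G be a semi-Markovian causal graph with observed variables V, let 𝔸 be a finite collection of subsets of V, and let Y ⊊ W ⊊ V be such that for every W′ ∈ W ∖ Y there exists a directed path in G[W] from W′ to some variable in Y. Then the causal effect of V ∖ W on Y is g-identifiable from (𝔸, G) if and only if Q[W] is g-identifiable from (𝔸, G). -/

import Mathlib

open scoped Classical

/-- A semi-Markovian causal graph: a DAG over a finite vertex set partitioned into
observed (`obs`) and unobserved (`unobs`) variables, where every unobserved variable
has no parents and exactly two (distinct, observed) children. -/
structure CausalGraph (ν : Type) [Fintype ν] [DecidableEq ν] where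
  obs : Finset ν
  unobs : Finset ν
  disj : Disjoint obs unobs
  E : ν → ν → Prop
  edge_mem : ∀ x y, E x y → x ∈ obs ∪ unobs ∧ y ∈ obs ∪ unobs
  acyclic : ∀ x, ¬ Relation.TransGen E x x
  unobs_no_parent : ∀ u ∈ unobs, ∀ w, ¬ E w u
  unobs_two_children : ∀ u ∈ unobs,
    ∃ a b, a ≠ b ∧ a ∈ obs ∧ b ∈ obs ∧ (∀ w, E u w ↔ w = a ∨ w = b)

namespace CausalGraph

variable {ν : Type} [Fintype ν] [DecidableEq ν]

def verts (G : CausalGraph ν) : Finset ν := G.obs ∪ G.unobs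

/-- A structural equation model over the causal graph `G`: finite nonempty domains
(encoded as finite sets of naturals), a pmf for each unobserved variable, and a
conditional pmf (given an assignment to the parents) for each observed variable. -/
structure SEM (G : CausalGraph ν) where
  dom : ν → Finset ℕ
  dom_ne : ∀ x, (dom x).Nonempty
  pU : ν → ℕ → ℝ
  pU_nonneg : ∀ u n, 0 ≤ pU u n
  pU_sum : ∀ u ∈ G.unobs, ∑ n ∈ dom u, pU u n = 1
  pO : ν → ℕ → (ν → ℕ) → ℝ
  pO_nonneg : ∀ x n pa, 0 ≤ pO x n pa
  pO_sum : ∀ x ∈ G.obs, ∀ pa : ν → ℕ, ∑ n ∈ dom x, pO x n pa = 1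
  pO_par : ∀ x n (pa pa' : ν → ℕ), (∀ p, G.E p x → pa p = pa' p) → pO x n pa = pO x n pa'

namespace SEM

variable {G : CausalGraph ν}

/-- Full assignments: all variables of `G` get values in their domains
(non-vertices are pinned to `0`). -/
noncomputable def fullAssign (M : SEM G) : Finset (ν → ℕ) :=
  Fintype.piFinset (fun x => if x ∈ G.verts then M.dom x else {0})

/-- Observed assignments `dom(V)`: observed variables get values in their domains
(all other coordinates are pinned to `0`). -/
noncomputable def obsAssign (M : SEM G) : Finset (ν → ℕ) :=
  Fintype.piFinset (fun x => if x ∈ G.obs then M.dom x else {0})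

/-- `Q^M[S](v) = Σ_u Π_{X ∈ S} P(x | pa_G(X)) Π_{U} P(u)`. -/
noncomputable def Q (M : SEM G) (S : Finset ν) (v : ν → ℕ) : ℝ :=
  ∑ w ∈ M.fullAssign.filter (fun w => ∀ x ∈ G.obs, w x = v x),
    (∏ x ∈ S, M.pO x (w x) w) * ∏ u ∈ G.unobs, M.pU u (w u)

/-- The observational distribution `P^M(v) = Q^M[V](v)`. -/
noncomputable def P (M : SEM G) (v : ν → ℕ) : ℝ := M.Q G.obs v

/-- Post-interventional probability `P^M_x(y)`: sum of `Q^M[V∖X]` over all observed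
realizations consistent with `x` on `X` and `y` on `Y`. -/
noncomputable def Px (M : SEM G) (X : Finset ν) (x : ν → ℕ) (Y : Finset ν) (y : ν → ℕ) : ℝ :=
  ∑ v ∈ M.obsAssign.filter (fun v => (∀ i ∈ X, v i = x i) ∧ (∀ i ∈ Y, v i = y i)),
    M.Q (G.obs \ X) v

/-- `M ∈ 𝕄⁺(G)`: strictly positive observational distribution. -/
def positive (M : SEM G) : Prop := ∀ v ∈ M.obsAssign, 0 < M.P v

end SEM

/-- The causal effect of `X` on `Y` is identifiable from `G`. -/
def Identifiable (G : CausalGraph ν) (X Y : Finset ν) : Prop :=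
  ∀ M₁ M₂ : SEM G, M₁.positive → M₂.positive →
    (∀ i ∈ G.obs, M₁.dom i = M₂.dom i) →
    (∀ v ∈ M₁.obsAssign, M₁.P v = M₂.P v) →
    ∀ x y : ν → ℕ, (∀ i ∈ X, x i ∈ M₁.dom i) → (∀ i ∈ Y, y i ∈ M₁.dom i) →
      M₁.Px X x Y y = M₂.Px X x Y y

/-- `Q[S]` is identifiable from `G`. -/
def QIdentifiable (G : CausalGraph ν) (S : Finset ν) : Prop :=
  Identifiable G (G.obs \ S) S

/-- The causal effect of `X` on `Y` is g-identifiable from `(𝔸, G)`. -/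
def GIdentifiable (G : CausalGraph ν) (𝔸 : Finset (Finset ν)) (X Y : Finset ν) : Prop :=
  ∀ M₁ M₂ : SEM G, M₁.positive → M₂.positive →
    (∀ i ∈ G.obs, M₁.dom i = M₂.dom i) →
    (∀ A ∈ 𝔸, ∀ v ∈ M₁.obsAssign, M₁.Q A v = M₂.Q A v) →
    ∀ x y : ν → ℕ, (∀ i ∈ X, x i ∈ M₁.dom i) → (∀ i ∈ Y, y i ∈ M₁.dom i) →
      M₁.Px X x Y y = M₂.Px X x Y y

/-- `Q[S]` is g-identifiable from `(𝔸, G)`. -/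
def QGIdentifiable (G : CausalGraph ν) (𝔸 : Finset (Finset ν)) (S : Finset ν) : Prop :=
  GIdentifiable G 𝔸 (G.obs \ S) S

/-- Bidirected edge of `G_X` between `a` and `b`: distinct members of `X` sharing an
unobserved parent (whose two children then necessarily both lie in `X`). -/
def biEdge (G : CausalGraph ν) (X : Finset ν) (a b : ν) : Prop :=
  a ≠ b ∧ a ∈ X ∧ b ∈ X ∧ ∃ u ∈ G.unobs, G.E u a ∧ G.E u b

/-- `X` is a single c-component of `G`. -/
def SingleC (G : CausalGraph ν) (X : Finset ν) : Prop :=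
  X.Nonempty ∧ ∀ a ∈ X, ∀ b ∈ X, Relation.ReflTransGen (G.biEdge X) a b

/-- The c-components of `S`: connected components of the bidirected part of `G_S`. -/
noncomputable def cComponents (G : CausalGraph ν) (S : Finset ν) : Finset (Finset ν) :=
  S.image (fun a => S.filter (fun b => Relation.ReflTransGen (G.biEdge S) a b))

/-- Directed edge of `G_X` (both endpoints in `X`). -/
def dirEdgeIn (G : CausalGraph ν) (X : Finset ν) (a b : ν) : Prop :=
  a ∈ X ∧ b ∈ X ∧ G.E a b

/-- `Anc_Y(G_X)`: members of `X` having a directed path in `G_X` to some member of `Y`. -/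
noncomputable def ancIn (G : CausalGraph ν) (X Y : Finset ν) : Finset ν :=
  X.filter (fun a => ∃ y ∈ Y, Relation.ReflTransGen (G.dirEdgeIn X) a y)

/-- Unobserved vertices of the induced subgraph `G[A]`: unobserved vertices of `G`
both of whose children lie in `A`. -/
noncomputable def inducedUnobs (G : CausalGraph ν) (A : Finset ν) : Finset ν :=
  G.unobs.filter (fun u => ∀ w, G.E u w → w ∈ A)

/-- The induced subgraph `G[A]`. -/
noncomputable def induced (G : CausalGraph ν) (A : Finset ν) : CausalGraph ν where
  obs := A ∩ G.obs
  unobs := G.inducedUnobs A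
  disj := G.disj.mono Finset.inter_subset_right (Finset.filter_subset _ _)
  E x y := G.E x y ∧ x ∈ (A ∩ G.obs) ∪ G.inducedUnobs A ∧ y ∈ (A ∩ G.obs) ∪ G.inducedUnobs A
  edge_mem := fun x y h => ⟨h.2.1, h.2.2⟩
  acyclic := fun x h => G.acyclic x
    (Relation.TransGen.mono (p := G.E) (by intro a b hab; exact hab.1) x x h)
  unobs_no_parent := fun u hu w hw =>
    G.unobs_no_parent u (Finset.mem_filter.mp hu).1 w hw.1
  unobs_two_children := by
    intro u hu
    have hu' := Finset.mem_filter.mp hu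
    obtain ⟨a, b, hab, ha, hb, hiff⟩ := G.unobs_two_children u hu'.1
    have hEa : G.E u a := (hiff a).mpr (Or.inl rfl)
    have hEb : G.E u b := (hiff b).mpr (Or.inr rfl)
    have haA : a ∈ A := hu'.2 a hEa
    have hbA : b ∈ A := hu'.2 b hEb
    refine ⟨a, b, hab, Finset.mem_inter.mpr ⟨haA, ha⟩, Finset.mem_inter.mpr ⟨hbA, hb⟩, ?_⟩
    intro w
    constructor
    · intro hw; exact (hiff w).mp hw.1
    · rintro (rfl | rfl)
      · exact ⟨hEa, Finset.mem_union.mpr (Or.inr hu),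
          Finset.mem_union.mpr (Or.inl (Finset.mem_inter.mpr ⟨haA, ha⟩))⟩
      · exact ⟨hEb, Finset.mem_union.mpr (Or.inr hu),
          Finset.mem_union.mpr (Or.inl (Finset.mem_inter.mpr ⟨hbA, hb⟩))⟩

/-- `H` is a subgraph of `G`. -/
def IsSubgraph (H G : CausalGraph ν) : Prop :=
  H.obs ⊆ G.obs ∧ H.unobs ⊆ G.unobs ∧ ∀ a b, H.E a b → G.E a b

/-- `H` is an `R`-rooted c-forest: `R` is the root set of `H`, the observed vertex set of
`H` is a single c-component, and every observed vertex has at most one child in `H`. -/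
def IsCForest (H : CausalGraph ν) (R : Finset ν) : Prop :=
  H.obs.filter (fun x => ∀ w, ¬ H.E x w) = R ∧
  H.SingleC H.obs ∧
  ∀ x ∈ H.obs, ∀ w w', H.E x w → H.E x w' → w = w'

end CausalGraph

set_option linter.unusedSectionVars false
namespace CausalGraph

variable {ν : Type} [Fintype ν] [DecidableEq ν]

namespace SEM

variable {G : CausalGraph ν}

lemma obsAssign_congr (M₁ M₂ : SEM G) (h : ∀ i ∈ G.obs, M₁.dom i = M₂.dom i) :
    M₁.obsAssign = M₂.obsAssign := by
  unfold obsAssign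
  congr 1
  funext x
  by_cases hx : x ∈ G.obs
  · simp [hx, h x hx]
  · simp [hx]

lemma Px_eq_Q (M : SEM G) (W : Finset ν) (hW : W ⊆ G.obs)
    (x w : ν → ℕ) (hx : ∀ i ∈ G.obs \ W, x i ∈ M.dom i) (hw : ∀ i ∈ W, w i ∈ M.dom i) :
    M.Px (G.obs \ W) x W w
      = M.Q W (fun p => if p ∈ W then w p else if p ∈ G.obs then x p else 0) := by
  set v₀ : ν → ℕ := fun p => if p ∈ W then w p else if p ∈ G.obs then x p else 0 with hv₀
  have hmem : v₀ ∈ M.obsAssign := by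
    rw [obsAssign, Fintype.mem_piFinset]
    intro p
    by_cases hp : p ∈ G.obs
    · by_cases hpW : p ∈ W
      · simpa [v₀, hp, hpW] using hw p hpW
      · simpa [v₀, hp, hpW] using hx p (Finset.mem_sdiff.mpr ⟨hp, hpW⟩)
    · have hpW : p ∉ W := fun h => hp (hW h)
      simp [v₀, hp, hpW]
  have hfilter : M.obsAssign.filter
      (fun v => (∀ i ∈ G.obs \ W, v i = x i) ∧ (∀ i ∈ W, v i = w i)) = {v₀} := by
    ext v
    simp only [Finset.mem_filter, Finset.mem_singleton]
    constructor
    · rintro ⟨hvmem, hvx, hvw⟩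
      funext p
      by_cases hpW : p ∈ W
      · simp [v₀, hpW, hvw p hpW]
      · by_cases hp : p ∈ G.obs
        · simp [v₀, hpW, hp, hvx p (Finset.mem_sdiff.mpr ⟨hp, hpW⟩)]
        · rw [obsAssign, Fintype.mem_piFinset] at hvmem
          have h0 := hvmem p
          simp [hp] at h0
          simp [v₀, hpW, hp, h0]
    · rintro rfl
      refine ⟨hmem, fun i hi => ?_, fun i hi => ?_⟩
      · rcases Finset.mem_sdiff.mp hi with ⟨h1, h2⟩
        simp [v₀, h2, h1]
      · simp [v₀, hi]
  rw [SEM.Px, hfilter, Finset.sum_singleton, Finset.sdiff_sdiff_eq_self hW]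

end SEM

/-! ### Payload encoding -/

def encodeL (l : List ν) (f : ν → ℕ) : ℕ := l.foldr (fun q c => Nat.pair (f q) c) 0

def decodeL : List ν → ℕ → ν → ℕ
  | [], _, _ => 0
  | q :: l, c, p => if p = q then (Nat.unpair c).1 else decodeL l (Nat.unpair c).2 p

lemma encodeL_cons (q : ν) (l : List ν) (f : ν → ℕ) :
    encodeL (q :: l) f = Nat.pair (f q) (encodeL l f) := rfl

lemma decodeL_encodeL {l : List ν} {p : ν} (hp : p ∈ l) (f : ν → ℕ) :
    decodeL l (encodeL l f) p = f p := by
  induction l with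
  | nil => cases hp
  | cons q l ih =>
    rw [encodeL_cons, decodeL]
    simp only [Nat.unpair_pair]
    by_cases h : p = q
    · simp [h]
    · have hpl : p ∈ l := by
        rcases List.mem_cons.mp hp with h' | h'
        · exact absurd h' h
        · exact h'
      simp [h, ih hpl]

lemma encodeL_congr {l : List ν} {f g : ν → ℕ} (h : ∀ p ∈ l, f p = g p) :
    encodeL l f = encodeL l g := by
  induction l with
  | nil => rfl
  | cons q l ih =>
    rw [encodeL_cons, encodeL_cons, h q List.mem_cons_self,
      ih (fun p hp => h p (List.mem_cons_of_mem q hp))]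

variable (W : Finset ν) (B : ℕ)

noncomputable def payloadSet : Finset (ν → ℕ) :=
  Fintype.piFinset (fun p => if p ∈ W then Finset.range (B + 2) else {0})

noncomputable def payloadDom : Finset ℕ := (payloadSet W B).image (encodeL W.toList)

lemma mem_payloadDom {f : ν → ℕ} (hf : ∀ p, (p ∈ W → f p ≤ B + 1) ∧ (p ∉ W → f p = 0)) :
    encodeL W.toList f ∈ payloadDom W B := by
  refine Finset.mem_image.mpr ⟨f, ?_, rfl⟩
  rw [payloadSet, Fintype.mem_piFinset]
  intro p
  by_cases hp : p ∈ W
  · rw [if_pos hp, Finset.mem_range]; have := (hf p).1 hp; omega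
  · simp [hp, (hf p).2 hp]

lemma payloadDom_card_pos : 0 < (payloadDom W B).card := by
  rw [Finset.card_pos]
  exact ⟨_, mem_payloadDom W B (f := fun _ => 0) (fun p => ⟨fun _ => Nat.zero_le _, fun _ => rfl⟩)⟩

end CausalGraph
namespace CausalGraph

variable {ν : Type} [Fintype ν] [DecidableEq ν]

/-- Original (non-payload) value carried by an enlarged assignment. -/
def opv (W : Finset ν) (pa : ν → ℕ) (p : ν) : ℕ :=
  if p ∈ W then (Nat.unpair (pa p)).1 else pa p

/-- Payload function carried by variable `q` in an enlarged assignment. -/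
noncomputable def plv (W : Finset ν) (pa : ν → ℕ) (q : ν) : ν → ℕ :=
  decodeL W.toList (Nat.unpair (pa q)).2

/-- The deterministic payload-merging function: the payload a node `Z ∈ W` should carry,
as computed from the enlarged values of its parents. -/
noncomputable def Fm (G : CausalGraph ν) (W : Finset ν) (B : ℕ) (Z : ν) (pa : ν → ℕ) :
    ν → ℕ := fun p =>
  if p ∈ W then
    min (B + 1) (max (if G.E p Z then opv W pa p + 1 else 0)
      ((W.filter (fun q => G.E q Z)).sup (fun q => plv W pa q p)))
  else 0

/-- The "correct" payload of node `Z`: records `z p + 1` for every strict ancestor `p` of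
`Z` in `G[W]`. -/
noncomputable def CPf (G : CausalGraph ν) (W : Finset ν) (z : ν → ℕ) (Z : ν) : ν → ℕ := fun p =>
  if p ∈ W ∧ Relation.TransGen (G.dirEdgeIn W) p Z then z p + 1 else 0

lemma Fm_mem_payloadDom (G : CausalGraph ν) (W : Finset ν) (B : ℕ) (Z : ν) (pa : ν → ℕ) :
    encodeL W.toList (Fm G W B Z pa) ∈ payloadDom W B := by
  apply mem_payloadDom
  intro p
  constructor
  · intro hp; simp [Fm, hp]
  · intro hp; simp [Fm, hp]

lemma Fm_congr (G : CausalGraph ν) (W : Finset ν) (B : ℕ) (Z : ν) {pa pa' : ν → ℕ}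
    (h : ∀ q ∈ W, G.E q Z → pa q = pa' q) : Fm G W B Z pa = Fm G W B Z pa' := by
  funext p
  rw [Fm, Fm]
  by_cases hp : p ∈ W
  · simp only [hp, if_pos]
    congr 2
    · by_cases hE : G.E p Z
      · simp [hE, opv, hp, h p hp hE]
      · simp [hE]
    · apply Finset.sup_congr rfl
      intro q hq
      rcases Finset.mem_filter.mp hq with ⟨hqW, hqE⟩
      rw [plv, plv, h q hqW hqE]
  · simp [hp]

/-- The merge lemma: if the parents of `Z` carry correct data, `Fm` computes the correct
payload of `Z`. -/
lemma Fm_eq_CPf (G : CausalGraph ν) (W : Finset ν) (B : ℕ) {Z : ν} (hZ : Z ∈ W)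
    (pa z : ν → ℕ) (hz : ∀ p ∈ W, z p ≤ B)
    (hpar : ∀ q ∈ W, G.E q Z →
      opv W pa q = z q ∧ ∀ p ∈ W, plv W pa q p = CPf G W z q p) :
    ∀ p, Fm G W B Z pa p = CPf G W z Z p := by
  intro p
  by_cases hp : p ∈ W
  swap
  · simp [Fm, CPf, hp]
  rw [Fm, CPf]
  simp only [hp, if_pos, true_and]
  by_cases hT : Relation.TransGen (G.dirEdgeIn W) p Z
  · rw [if_pos hT]
    have hle1 : (if G.E p Z then opv W pa p + 1 else 0) ≤ z p + 1 := by
      by_cases hE : G.E p Z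
      · rw [if_pos hE, (hpar p hp hE).1]
      · rw [if_neg hE]; omega
    have hle2 : (W.filter (fun q => G.E q Z)).sup (fun q => plv W pa q p) ≤ z p + 1 := by
      apply Finset.sup_le
      intro q hq
      rcases Finset.mem_filter.mp hq with ⟨hqW, hqE⟩
      rw [(hpar q hqW hqE).2 p hp, CPf]
      by_cases hc : p ∈ W ∧ Relation.TransGen (G.dirEdgeIn W) p q
      · rw [if_pos hc]
      · rw [if_neg hc]; omega
    have hge : z p + 1 ≤ max (if G.E p Z then opv W pa p + 1 else 0)
        ((W.filter (fun q => G.E q Z)).sup (fun q => plv W pa q p)) := by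
      rcases Relation.TransGen.tail'_iff.mp hT with ⟨b, hab, hbZ⟩
      rcases Relation.reflTransGen_iff_eq_or_transGen.mp hab with heq | htb
      · rw [heq] at hbZ
        have hE : G.E p Z := hbZ.2.2
        calc z p + 1 = (if G.E p Z then opv W pa p + 1 else 0) := by
              rw [if_pos hE, (hpar p hp hE).1]
        _ ≤ _ := le_max_left _ _
      · have hbW : b ∈ W := hbZ.1
        have hbE : G.E b Z := hbZ.2.2
        have heq : z p + 1 = plv W pa b p := by
          rw [(hpar b hbW hbE).2 p hp, CPf, if_pos ⟨hp, htb⟩]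
        calc z p + 1 = plv W pa b p := heq
        _ ≤ (W.filter (fun q => G.E q Z)).sup (fun q => plv W pa q p) :=
              Finset.le_sup (f := fun q => plv W pa q p) (Finset.mem_filter.mpr ⟨hbW, hbE⟩)
        _ ≤ _ := le_max_right _ _
    have hmax : max (if G.E p Z then opv W pa p + 1 else 0)
        ((W.filter (fun q => G.E q Z)).sup (fun q => plv W pa q p)) = z p + 1 :=
      le_antisymm (max_le hle1 hle2) hge
    rw [hmax, min_eq_right (by have := hz p hp; omega)]
  · rw [if_neg hT]
    have h1 : (if G.E p Z then opv W pa p + 1 else 0) = 0 := by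
      rw [if_neg]
      intro hE
      exact hT (Relation.TransGen.single ⟨hp, hZ, hE⟩)
    have h2 : (W.filter (fun q => G.E q Z)).sup (fun q => plv W pa q p) = 0 := by
      apply Nat.eq_zero_of_le_zero
      apply Finset.sup_le
      intro q hq
      rcases Finset.mem_filter.mp hq with ⟨hqW, hqE⟩
      rw [(hpar q hqW hqE).2 p hp, CPf, if_neg]
      rintro ⟨-, htq⟩
      exact hT (htq.tail ⟨hqW, hZ, hqE⟩)
    rw [h1, h2]
    simp

end CausalGraph
namespace CausalGraph

variable {ν : Type} [Fintype ν] [DecidableEq ν]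

/-- Enlarged domains: variables in `W` carry an original value paired with a payload. -/
noncomputable def domE (W : Finset ν) (B : ℕ) {G : CausalGraph ν} (M : SEM G) : ν → Finset ℕ :=
  fun p => if p ∈ W then (M.dom p ×ˢ payloadDom W B).image (fun q => Nat.pair q.1 q.2)
    else M.dom p

lemma of_mem_domE {W : Finset ν} {B : ℕ} {G : CausalGraph ν} {M : SEM G} {p : ν} {n : ℕ}
    (hp : p ∈ W) (hn : n ∈ domE W B M p) :
    (Nat.unpair n).1 ∈ M.dom p ∧ (Nat.unpair n).2 ∈ payloadDom W B ∧
      Nat.pair (Nat.unpair n).1 (Nat.unpair n).2 = n := by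
  rw [domE, if_pos hp] at hn
  rcases Finset.mem_image.mp hn with ⟨⟨a, b⟩, hab, rfl⟩
  rcases Finset.mem_product.mp hab with ⟨ha, hb⟩
  simp [ha, hb]

lemma pair_mem_domE {W : Finset ν} {B : ℕ} {G : CausalGraph ν} {M : SEM G} {p : ν} {a b : ℕ}
    (hp : p ∈ W) (ha : a ∈ M.dom p) (hb : b ∈ payloadDom W B) :
    Nat.pair a b ∈ domE W B M p := by
  rw [domE, if_pos hp]
  exact Finset.mem_image.mpr ⟨⟨a, b⟩, Finset.mem_product.mpr ⟨ha, hb⟩, rfl⟩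

/-- The noisy payload mechanism. -/
noncomputable def pOnoise (G : CausalGraph ν) (W : Finset ν) (B : ℕ) (ε : ℝ) (Z : ν)
    (n : ℕ) (pa : ν → ℕ) : ℝ :=
  (1 - ε) * (if (Nat.unpair n).2 = encodeL W.toList (Fm G W B Z pa) then 1 else 0)
    + ε / (payloadDom W B).card

lemma pOnoise_nonneg (G : CausalGraph ν) (W : Finset ν) (B : ℕ) {ε : ℝ}
    (hε0 : 0 ≤ ε) (hε1 : ε ≤ 1) (Z : ν) (n : ℕ) (pa : ν → ℕ) :
    0 ≤ pOnoise G W B ε Z n pa := by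
  rw [pOnoise]
  have h1 : (0:ℝ) ≤ 1 - ε := by linarith
  have h2 : (0:ℝ) ≤ (if (Nat.unpair n).2 = encodeL W.toList (Fm G W B Z pa) then (1:ℝ) else 0) := by
    split <;> norm_num
  have h3 : (0:ℝ) ≤ ε / (payloadDom W B).card := div_nonneg hε0 (Nat.cast_nonneg _)
  have := mul_nonneg h1 h2
  linarith

lemma pOnoise_pos (G : CausalGraph ν) (W : Finset ν) (B : ℕ) {ε : ℝ}
    (hε0 : 0 < ε) (hε1 : ε ≤ 1) (Z : ν) (n : ℕ) (pa : ν → ℕ) :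
    0 < pOnoise G W B ε Z n pa := by
  rw [pOnoise]
  have h1 : (0:ℝ) ≤ 1 - ε := by linarith
  have h2 : (0:ℝ) ≤ (if (Nat.unpair n).2 = encodeL W.toList (Fm G W B Z pa) then (1:ℝ) else 0) := by
    split <;> norm_num
  have h3 : (0:ℝ) < ε / (payloadDom W B).card := by
    apply div_pos hε0
    exact_mod_cast payloadDom_card_pos W B
  have := mul_nonneg h1 h2
  linarith

lemma pOnoise_sum (G : CausalGraph ν) (W : Finset ν) (B : ℕ) (ε : ℝ) (Z : ν) (a : ℕ)
    (pa : ν → ℕ) : ∑ b ∈ payloadDom W B, pOnoise G W B ε Z (Nat.pair a b) pa = 1 := by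
  have hN : ((payloadDom W B).card : ℝ) ≠ 0 := by
    exact_mod_cast Nat.pos_iff_ne_zero.mp (payloadDom_card_pos W B)
  simp only [pOnoise, Nat.unpair_pair]
  rw [Finset.sum_add_distrib, ← Finset.mul_sum,
    Finset.sum_ite_eq' (payloadDom W B) (encodeL W.toList (Fm G W B Z pa)) (fun _ => (1:ℝ)),
    if_pos (Fm_mem_payloadDom G W B Z pa), Finset.sum_const, nsmul_eq_mul, mul_div_assoc']
  field_simp
  ring

/-- The extended model: each variable of `W` additionally carries a payload aggregating
the original values of its strict ancestors within `G[W]`, with `ε`-noise to preserve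
positivity. -/
noncomputable def extend (G : CausalGraph ν) (W : Finset ν) (B : ℕ) (M : SEM G)
    (hW : W ⊆ G.obs) (ε : ℝ) (hε0 : 0 ≤ ε) (hε1 : ε ≤ 1) : SEM G where
  dom := domE W B M
  dom_ne := by
    intro p
    rw [domE]
    by_cases hp : p ∈ W
    · rw [if_pos hp]
      obtain ⟨a, ha⟩ := M.dom_ne p
      obtain ⟨b, hb⟩ := Finset.card_pos.mp (payloadDom_card_pos W B)
      exact Finset.Nonempty.image ⟨⟨a, b⟩, Finset.mem_product.mpr ⟨ha, hb⟩⟩ _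
    · rw [if_neg hp]
      exact M.dom_ne p
  pU := M.pU
  pU_nonneg := M.pU_nonneg
  pU_sum := by
    intro u hu
    have huW : u ∉ W := fun h => Finset.disjoint_left.mp G.disj (hW h) hu
    simpa [domE, huW] using M.pU_sum u hu
  pO := fun Z n pa => if Z ∈ W
    then M.pO Z (Nat.unpair n).1 (opv W pa) * pOnoise G W B ε Z n pa
    else M.pO Z n (opv W pa)
  pO_nonneg := by
    intro Z n pa
    by_cases hZ : Z ∈ W
    · rw [if_pos hZ]
      exact mul_nonneg (M.pO_nonneg _ _ _) (pOnoise_nonneg G W B hε0 hε1 Z n pa)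
    · rw [if_neg hZ]
      exact M.pO_nonneg _ _ _
  pO_sum := by
    intro Z hZ pa
    by_cases hZW : Z ∈ W
    · simp only [if_pos hZW, domE]
      rw [Finset.sum_image (fun a ha b hb hab => by
        have h := congrArg Nat.unpair hab
        simpa [Nat.unpair_pair, Prod.ext_iff] using h), Finset.sum_product]
      have : ∀ a ∈ M.dom Z,
          ∑ b ∈ payloadDom W B,
            M.pO Z (Nat.pair a b).unpair.1 (opv W pa) * pOnoise G W B ε Z (Nat.pair a b) pa
          = M.pO Z a (opv W pa) := by
        intro a _
        simp only [Nat.unpair_pair]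
        rw [← Finset.mul_sum, pOnoise_sum, mul_one]
      rw [Finset.sum_congr rfl this]
      exact M.pO_sum Z hZ (opv W pa)
    · simp only [if_neg hZW, domE]
      exact M.pO_sum Z hZ (opv W pa)
  pO_par := by
    intro Z n pa pa' h
    have hopv : ∀ p, G.E p Z → opv W pa p = opv W pa' p := by
      intro p hp
      rw [opv, opv, h p hp]
    have hFm : Fm G W B Z pa = Fm G W B Z pa' :=
      Fm_congr G W B Z (fun q _ hE => h q hE)
    by_cases hZ : Z ∈ W
    · rw [if_pos hZ, if_pos hZ, M.pO_par _ _ _ _ hopv, pOnoise, pOnoise, hFm]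
    · rw [if_neg hZ, if_neg hZ, M.pO_par _ _ _ _ hopv]

@[simp] lemma extend_dom (G : CausalGraph ν) (W : Finset ν) (B : ℕ) (M : SEM G)
    (hW : W ⊆ G.obs) (ε : ℝ) (hε0 : 0 ≤ ε) (hε1 : ε ≤ 1) :
    (extend G W B M hW ε hε0 hε1).dom = domE W B M := rfl

@[simp] lemma extend_pU (G : CausalGraph ν) (W : Finset ν) (B : ℕ) (M : SEM G)
    (hW : W ⊆ G.obs) (ε : ℝ) (hε0 : 0 ≤ ε) (hε1 : ε ≤ 1) :
    (extend G W B M hW ε hε0 hε1).pU = M.pU := rfl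

lemma extend_pO (G : CausalGraph ν) (W : Finset ν) (B : ℕ) (M : SEM G)
    (hW : W ⊆ G.obs) (ε : ℝ) (hε0 : 0 ≤ ε) (hε1 : ε ≤ 1) (Z : ν) (n : ℕ) (pa : ν → ℕ) :
    (extend G W B M hW ε hε0 hε1).pO Z n pa = if Z ∈ W
      then M.pO Z (Nat.unpair n).1 (opv W pa) * pOnoise G W B ε Z n pa
      else M.pO Z n (opv W pa) := rfl

end CausalGraph
namespace CausalGraph

variable {ν : Type} [Fintype ν] [DecidableEq ν]

lemma opv_mem_obsAssign {G : CausalGraph ν} {W : Finset ν} {B : ℕ} {M : SEM G}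
    (hW : W ⊆ G.obs) {v' : ν → ℕ}
    (hv' : ∀ p, v' p ∈ (if p ∈ G.obs then domE W B M p else ({0} : Finset ℕ))) :
    opv W v' ∈ M.obsAssign := by
  rw [SEM.obsAssign, Fintype.mem_piFinset]
  intro p
  have h := hv' p
  by_cases hp : p ∈ G.obs
  · rw [if_pos hp] at h ⊢
    by_cases hpW : p ∈ W
    · rw [opv, if_pos hpW]
      exact (of_mem_domE hpW h).1
    · rw [opv, if_neg hpW]
      rwa [domE, if_neg hpW] at h
  · rw [if_neg hp] at h ⊢
    have hpW : p ∉ W := fun hh => hp (hW hh)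
    rwa [opv, if_neg hpW]

lemma Q_extend (G : CausalGraph ν) (W : Finset ν) (B : ℕ) (M : SEM G) (hW : W ⊆ G.obs)
    (ε : ℝ) (hε0 : 0 ≤ ε) (hε1 : ε ≤ 1) (A : Finset ν) (v' : ν → ℕ)
    (hv' : ∀ p, v' p ∈ (if p ∈ G.obs then domE W B M p else ({0} : Finset ℕ))) :
    (extend G W B M hW ε hε0 hε1).Q A v'
      = (∏ Z ∈ A.filter (fun Z => Z ∈ W), pOnoise G W B ε Z (v' Z) v')
          * M.Q A (opv W v') := by
  set M' := extend G W B M hW ε hε0 hε1 with hM'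
  rw [SEM.Q, SEM.Q, Finset.mul_sum]
  have hWverts : ∀ p ∈ W, p ∈ G.verts := fun p hp => Finset.mem_union_left _ (hW hp)
  refine Finset.sum_nbij' (opv W) (fun w p => if p ∈ W then v' p else w p) ?_ ?_ ?_ ?_ ?_
  · -- forward membership
    intro w' hw'
    rcases Finset.mem_filter.mp hw' with ⟨hmem, hagree⟩
    rw [SEM.fullAssign, Fintype.mem_piFinset] at hmem
    refine Finset.mem_filter.mpr ⟨?_, ?_⟩
    · rw [SEM.fullAssign, Fintype.mem_piFinset]
      intro p
      have hm := hmem p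
      by_cases hpv : p ∈ G.verts
      · rw [if_pos hpv] at hm ⊢
        rw [extend_dom] at hm
        by_cases hpW : p ∈ W
        · rw [opv, if_pos hpW]
          exact (of_mem_domE hpW hm).1
        · rw [opv, if_neg hpW]
          rwa [domE, if_neg hpW] at hm
      · rw [if_neg hpv] at hm ⊢
        have hpW : p ∉ W := fun h => hpv (hWverts p h)
        rwa [opv, if_neg hpW]
    · intro p hp
      rw [opv, opv]
      by_cases hpW : p ∈ W
      · rw [if_pos hpW, if_pos hpW, hagree p hp]
      · rw [if_neg hpW, if_neg hpW, hagree p hp]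
  · -- backward membership
    intro w hw
    rcases Finset.mem_filter.mp hw with ⟨hmem, hagree⟩
    rw [SEM.fullAssign, Fintype.mem_piFinset] at hmem
    refine Finset.mem_filter.mpr ⟨?_, ?_⟩
    · rw [SEM.fullAssign, Fintype.mem_piFinset]
      intro p
      have hm := hmem p
      by_cases hpv : p ∈ G.verts
      · rw [if_pos hpv] at hm ⊢
        rw [extend_dom]
        by_cases hpW : p ∈ W
        · simp only [if_pos hpW]
          have := hv' p
          rwa [if_pos (hW hpW)] at this
        · simp only [if_neg hpW]
          rwa [domE, if_neg hpW]
      · rw [if_neg hpv] at hm ⊢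
        have hpW : p ∉ W := fun h => hpv (hWverts p h)
        simpa only [if_neg hpW] using hm
    · intro p hp
      by_cases hpW : p ∈ W
      · simp only [if_pos hpW]
      · simp only [if_neg hpW]
        rw [hagree p hp, opv, if_neg hpW]
  · -- left inverse
    intro w' hw'
    rcases Finset.mem_filter.mp hw' with ⟨_, hagree⟩
    funext p
    by_cases hpW : p ∈ W
    · simp only [if_pos hpW]
      exact (hagree p (hW hpW)).symm
    · simp only [if_neg hpW]
      rw [opv, if_neg hpW]
  · -- right inverse
    intro w hw
    rcases Finset.mem_filter.mp hw with ⟨_, hagree⟩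
    funext p
    by_cases hpW : p ∈ W
    · rw [opv, if_pos hpW, if_pos hpW, hagree p (hW hpW), opv, if_pos hpW]
    · rw [opv, if_neg hpW, if_neg hpW]
  · -- summand
    intro w' hw'
    rcases Finset.mem_filter.mp hw' with ⟨_, hagree⟩
    have hpO : ∀ Z, M'.pO Z (w' Z) w'
        = (if Z ∈ W then pOnoise G W B ε Z (v' Z) v' else 1)
            * M.pO Z (opv W w' Z) (opv W w') := by
      intro Z
      rw [hM', extend_pO]
      by_cases hZ : Z ∈ W
      · simp only [if_pos hZ]
        have h1 : (Nat.unpair (w' Z)).1 = opv W w' Z := by rw [opv, if_pos hZ]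
        have h3 : pOnoise G W B ε Z (w' Z) w' = pOnoise G W B ε Z (v' Z) v' := by
          rw [pOnoise, pOnoise, hagree Z (hW hZ),
            Fm_congr G W B Z (fun q hq _ => hagree q (hW hq))]
        rw [h1, h3]
        ring
      · simp only [if_neg hZ, one_mul]
        congr 1
        rw [opv, if_neg hZ]
    have hprod : ∏ Z ∈ A, M'.pO Z (w' Z) w'
        = (∏ Z ∈ A.filter (fun Z => Z ∈ W), pOnoise G W B ε Z (v' Z) v')
            * ∏ Z ∈ A, M.pO Z (opv W w' Z) (opv W w') := by
      rw [Finset.prod_congr rfl (fun Z _ => hpO Z), Finset.prod_mul_distrib,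
        Finset.prod_filter]
    have hpU : ∏ u ∈ G.unobs, M'.pU u (w' u) = ∏ u ∈ G.unobs, M.pU u (opv W w' u) := by
      apply Finset.prod_congr rfl
      intro u hu
      have huW : u ∉ W := fun h => Finset.disjoint_left.mp G.disj (hW h) hu
      rw [hM', extend_pU, opv, if_neg huW]
    rw [hprod, hpU]
    ring

lemma obs_filter_of_subset {W O : Finset ν} (hW : W ⊆ O) :
    O.filter (fun Z => Z ∈ W) = W := by
  ext z
  simp only [Finset.mem_filter]
  exact ⟨fun h => h.2, fun h => ⟨hW h, h⟩⟩

lemma extend_P (G : CausalGraph ν) (W : Finset ν) (B : ℕ) (M : SEM G) (hW : W ⊆ G.obs)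
    (ε : ℝ) (hε0 : 0 ≤ ε) (hε1 : ε ≤ 1) (v' : ν → ℕ)
    (hv' : ∀ p, v' p ∈ (if p ∈ G.obs then domE W B M p else ({0} : Finset ℕ))) :
    (extend G W B M hW ε hε0 hε1).P v'
      = (∏ Z ∈ W, pOnoise G W B ε Z (v' Z) v') * M.P (opv W v') := by
  rw [SEM.P, SEM.P, Q_extend G W B M hW ε hε0 hε1 G.obs v' hv', obs_filter_of_subset hW]

lemma extend_positive (G : CausalGraph ν) (W : Finset ν) (B : ℕ) (M : SEM G)
    (hpos : M.positive) (hW : W ⊆ G.obs) {ε : ℝ} (hε0 : 0 < ε) (hε1 : ε ≤ 1) :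
    (extend G W B M hW ε hε0.le hε1).positive := by
  intro v' hv'
  have hv'' : ∀ p, v' p ∈ (if p ∈ G.obs then domE W B M p else ({0} : Finset ℕ)) := by
    rw [SEM.obsAssign, Fintype.mem_piFinset] at hv'
    simpa using hv'
  rw [extend_P G W B M hW ε hε0.le hε1 v' hv'']
  apply mul_pos
  · exact Finset.prod_pos (fun Z _ => pOnoise_pos G W B hε0 hε1 Z (v' Z) v')
  · exact hpos _ (opv_mem_obsAssign hW hv'')

end CausalGraph
namespace CausalGraph

variable {ν : Type} [Fintype ν] [DecidableEq ν]

lemma CPf_apply_pos (G : CausalGraph ν) (W : Finset ν) (z : ν → ℕ) (Z p : ν)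
    (h : p ∈ W ∧ Relation.TransGen (G.dirEdgeIn W) p Z) : CPf G W z Z p = z p + 1 := by
  rw [CPf]; exact if_pos h

lemma dirEdgeIn_wf (G : CausalGraph ν) (W : Finset ν) :
    WellFounded (Relation.TransGen (G.dirEdgeIn W)) := by
  have hirr : ∀ a, ¬ Relation.TransGen (G.dirEdgeIn W) a a := fun a h =>
    G.acyclic a (Relation.TransGen.mono (p := G.E) (by intro x y hxy; exact hxy.2.2) a a h)
  letI : IsTrans ν (Relation.TransGen (G.dirEdgeIn W)) := ⟨fun _ _ _ => Relation.TransGen.trans⟩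
  letI : IsIrrefl ν (Relation.TransGen (G.dirEdgeIn W)) := ⟨hirr⟩
  exact Finite.wellFounded_of_trans_of_irrefl _

/-- In a consistent enlarged assignment, every node of `W` carries the canonical payload
determined by the original values. -/
lemma cons_payload (G : CausalGraph ν) (W : Finset ν) (B : ℕ) (v' : ν → ℕ)
    (hz : ∀ p ∈ W, opv W v' p ≤ B)
    (hcons : ∀ Z ∈ W, (Nat.unpair (v' Z)).2 = encodeL W.toList (Fm G W B Z v')) :
    ∀ Z ∈ W, ∀ p, Fm G W B Z v' p = CPf G W (opv W v') Z p := by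
  intro Z
  refine (dirEdgeIn_wf G W).induction
    (C := fun Z => Z ∈ W → ∀ p, Fm G W B Z v' p = CPf G W (opv W v') Z p) Z ?_
  intro Z IH hZ
  apply Fm_eq_CPf G W B hZ v' (opv W v') hz
  intro q hq hE
  refine ⟨rfl, ?_⟩
  intro p hp
  rw [plv, hcons q hq, decodeL_encodeL (Finset.mem_toList.mpr hp)]
  exact IH q (Relation.TransGen.single ⟨hq, hZ, hE⟩) hq p

/-- The canonical consistent enlarged assignment determined by `x` (off `W`) and `w`
(on `W`). -/
noncomputable def vstar (G : CausalGraph ν) (W : Finset ν) (x w : ν → ℕ) : ν → ℕ := fun p =>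
  if p ∈ W then Nat.pair (w p) (encodeL W.toList (CPf G W w p))
  else if p ∈ G.obs then x p else 0

lemma CPf_mem_payloadDom (G : CausalGraph ν) (W : Finset ν) (B : ℕ) (w : ν → ℕ)
    (hwB : ∀ p ∈ W, w p ≤ B) (Z : ν) :
    encodeL W.toList (CPf G W w Z) ∈ payloadDom W B := by
  apply mem_payloadDom
  intro p
  constructor
  · intro hp
    rw [CPf]
    split
    · have := hwB p hp; omega
    · omega
  · intro hp
    rw [CPf, if_neg (fun hc => hp hc.1)]

lemma opv_vstar (G : CausalGraph ν) (W : Finset ν) (x w : ν → ℕ) :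
    opv W (vstar G W x w)
      = fun p => if p ∈ W then w p else if p ∈ G.obs then x p else 0 := by
  funext p
  rw [opv, vstar]
  by_cases hp : p ∈ W
  · simp [hp]
  · simp [hp]

lemma vstar_cons (G : CausalGraph ν) (W : Finset ν) (B : ℕ) (x w : ν → ℕ)
    (hwB : ∀ p ∈ W, w p ≤ B) :
    ∀ Z ∈ W, (Nat.unpair (vstar G W x w Z)).2
      = encodeL W.toList (Fm G W B Z (vstar G W x w)) := by
  intro Z hZ
  have hFm : ∀ p, Fm G W B Z (vstar G W x w) p = CPf G W w Z p := by
    apply Fm_eq_CPf G W B hZ (vstar G W x w) w hwB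
    intro q hq hE
    constructor
    · rw [opv, if_pos hq, vstar]
      simp [hq]
    · intro p hp
      rw [plv, vstar]
      simp only [hq, if_pos, Nat.unpair_pair]
      rw [decodeL_encodeL (Finset.mem_toList.mpr hp)]
  rw [vstar, if_pos hZ, Nat.unpair_pair]
  exact (encodeL_congr (fun p _ => (hFm p).symm))

/-- Uniqueness: a consistent enlarged assignment matching `x` off `W` and matching the
canonical assignment on `Y` must be the canonical assignment, provided every node of
`W \ Y` has a directed path in `G[W]` to `Y`. -/
lemma cons_unique (G : CausalGraph ν) (W : Finset ν) (B : ℕ) (Y : Finset ν) {M : SEM G}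
    (hW : W ⊆ G.obs) (hYW : Y ⊆ W)
    (hpath : ∀ p ∈ W \ Y, ∃ y ∈ Y, Relation.ReflTransGen (G.dirEdgeIn W) p y)
    (x w : ν → ℕ) (hB : ∀ p ∈ W, ∀ a ∈ M.dom p, a ≤ B) (hwB : ∀ p ∈ W, w p ≤ B)
    (v' : ν → ℕ)
    (hmem : ∀ p, v' p ∈ (if p ∈ G.obs then domE W B M p else ({0} : Finset ℕ)))
    (hxc : ∀ i ∈ G.obs \ W, v' i = x i)
    (hyc : ∀ i ∈ Y, v' i = vstar G W x w i)
    (hcons : ∀ Z ∈ W, (Nat.unpair (v' Z)).2 = encodeL W.toList (Fm G W B Z v')) :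
    v' = vstar G W x w := by
  have hdomv : ∀ p ∈ W, (Nat.unpair (v' p)).1 ∈ M.dom p ∧
      Nat.pair (Nat.unpair (v' p)).1 (Nat.unpair (v' p)).2 = v' p := by
    intro p hp
    have h := hmem p
    rw [if_pos (hW hp)] at h
    obtain ⟨h1, _, h3⟩ := of_mem_domE hp h
    exact ⟨h1, h3⟩
  set z := opv W v' with hzdef
  have hzB : ∀ p ∈ W, z p ≤ B := by
    intro p hp
    rw [hzdef, opv, if_pos hp]
    exact hB p hp _ (hdomv p hp).1
  have hF := cons_payload G W B v' hzB hcons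
  have hzY : ∀ i ∈ Y, z i = w i := by
    intro i hi
    rw [hzdef, opv, if_pos (hYW hi), hyc i hi, vstar, if_pos (hYW hi), Nat.unpair_pair]
  have hzW : ∀ p ∈ W, z p = w p := by
    intro p hp
    by_cases hpY : p ∈ Y
    · exact hzY p hpY
    · obtain ⟨y, hy, hpy⟩ := hpath p (Finset.mem_sdiff.mpr ⟨hp, hpY⟩)
      have hT : Relation.TransGen (G.dirEdgeIn W) p y := by
        rcases Relation.reflTransGen_iff_eq_or_transGen.mp hpy with heq | ht
        · exact absurd (heq ▸ hy) hpY
        · exact ht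
      have hyW : y ∈ W := hYW hy
      have h1 : (Nat.unpair (v' y)).2 = encodeL W.toList (Fm G W B y v') := hcons y hyW
      have h2 : (Nat.unpair (v' y)).2 = encodeL W.toList (CPf G W w y) := by
        rw [hyc y hy, vstar, if_pos hyW, Nat.unpair_pair]
      have h3 : encodeL W.toList (Fm G W B y v') = encodeL W.toList (CPf G W w y) := by
        rw [← h1, h2]
      have h4 := congrArg (fun c => decodeL W.toList c p) h3
      rw [decodeL_encodeL (Finset.mem_toList.mpr hp), decodeL_encodeL (Finset.mem_toList.mpr hp)] at h4
      rw [hF y hyW p, CPf_apply_pos G W z y p ⟨hp, hT⟩, CPf_apply_pos G W w y p ⟨hp, hT⟩] at h4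
      omega
  have hCP : ∀ Z, CPf G W z Z = CPf G W w Z := by
    intro Z
    funext q
    rw [CPf, CPf]
    by_cases hc : q ∈ W ∧ Relation.TransGen (G.dirEdgeIn W) q Z
    · rw [if_pos hc, if_pos hc, hzW q hc.1]
    · rw [if_neg hc, if_neg hc]
  funext p
  by_cases hp : p ∈ W
  · have hpair := (hdomv p hp).2
    have hpl : (Nat.unpair (v' p)).2 = encodeL W.toList (CPf G W w p) := by
      rw [hcons p hp]
      exact encodeL_congr (fun q _ => by rw [hF p hp q, hCP p])
    have hfst : (Nat.unpair (v' p)).1 = w p := by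
      have : z p = w p := hzW p hp
      rwa [hzdef, opv, if_pos hp] at this
    rw [vstar, if_pos hp, ← hpair, hfst, hpl]
  · by_cases hpo : p ∈ G.obs
    · rw [vstar, if_neg hp, if_pos hpo]
      exact hxc p (Finset.mem_sdiff.mpr ⟨hpo, hp⟩)
    · rw [vstar, if_neg hp, if_neg hpo]
      have h := hmem p
      rw [if_neg hpo] at h
      simpa using h

end CausalGraph
/-- Lemma 10. If `Y ⊊ W ⊊ V` and every `W' ∈ W ∖ Y` has a directed
path in `G[W]` to some variable of `Y`, then the causal effect of `V ∖ W` on `Y` is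
g-identifiable from `(𝔸, G)` iff `Q[W]` is g-identifiable from `(𝔸, G)`. -/
theorem gid_effect_iff_gid_QW
    {ν : Type} [Fintype ν] [DecidableEq ν] (G : CausalGraph ν)
    (𝔸 : Finset (Finset ν)) (h𝔸 : ∀ A ∈ 𝔸, A ⊆ G.obs)
    (Y W : Finset ν) (hYW : Y ⊂ W) (hWV : W ⊂ G.obs)
    (hpath : ∀ w ∈ W \ Y, ∃ y ∈ Y, Relation.ReflTransGen (G.dirEdgeIn W) w y) :
    G.GIdentifiable 𝔸 (G.obs \ W) Y ↔ G.QGIdentifiable 𝔸 W := by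
  classical
  have hWobs : W ⊆ G.obs := hWV.subset
  have hYsubW : Y ⊆ W := hYW.subset
  have hXW : G.obs \ (G.obs \ W) = W := Finset.sdiff_sdiff_eq_self hWobs
  constructor
  · -- (⇒) effect on `Y` g-identifiable implies `Q[W]` g-identifiable
    intro H
    intro M₁ M₂ hpos₁ hpos₂ hdom hQ x w hx hw
    set B := W.sup (fun p => (M₁.dom p).sup id) with hB
    have hBbound : ∀ p ∈ W, ∀ a ∈ M₁.dom p, a ≤ B := by
      intro p hp a ha
      calc a = id a := rfl
      _ ≤ (M₁.dom p).sup id := Finset.le_sup ha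
      _ ≤ B := Finset.le_sup (f := fun p => (M₁.dom p).sup id) hp
    have hwB : ∀ p ∈ W, w p ≤ B := fun p hp => hBbound p hp _ (hw p hp)
    set v'₀ := CausalGraph.vstar G W x w with hv0
    set v₀ : ν → ℕ := fun p => if p ∈ W then w p else if p ∈ G.obs then x p else 0
      with hv₀def
    have hdomE : ∀ p ∈ G.obs, CausalGraph.domE W B M₁ p = CausalGraph.domE W B M₂ p := by
      intro p hp
      rw [CausalGraph.domE, CausalGraph.domE, hdom p hp]
    have hv'mem1 : ∀ p, v'₀ p ∈
        (if p ∈ G.obs then CausalGraph.domE W B M₁ p else ({0} : Finset ℕ)) := by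
      intro p
      by_cases hpW : p ∈ W
      · rw [if_pos (hWobs hpW), hv0, CausalGraph.vstar, if_pos hpW]
        exact CausalGraph.pair_mem_domE hpW (hw p hpW)
          (CausalGraph.CPf_mem_payloadDom G W B w hwB p)
      · by_cases hpo : p ∈ G.obs
        · rw [if_pos hpo, hv0, CausalGraph.vstar, if_neg hpW, if_pos hpo,
            CausalGraph.domE, if_neg hpW]
          exact hx p (Finset.mem_sdiff.mpr ⟨hpo, hpW⟩)
        · rw [if_neg hpo, hv0, CausalGraph.vstar, if_neg hpW, if_neg hpo]
          exact Finset.mem_singleton_self 0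
    set T := (Fintype.piFinset
        (fun p => if p ∈ G.obs then CausalGraph.domE W B M₁ p else ({0} : Finset ℕ))).filter
        (fun v => (∀ i ∈ G.obs \ W, v i = x i) ∧ (∀ i ∈ Y, v i = v'₀ i)) with hT
    set f : G.SEM → ℝ → ℝ := fun M ε =>
      ∑ v' ∈ T, (∏ Z ∈ W, CausalGraph.pOnoise G W B ε Z (v' Z) v') * M.Q W (CausalGraph.opv W v')
      with hf
    -- Step 1: the two polynomials agree on (0,1)
    have hstep1 : Set.EqOn (f M₁) (f M₂) (Set.Ioo (0:ℝ) 1) := by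
      rintro ε ⟨hε0, hε1⟩
      have hε1' : ε ≤ 1 := hε1.le
      set M₁' := CausalGraph.extend G W B M₁ hWobs ε hε0.le hε1' with hM₁'
      set M₂' := CausalGraph.extend G W B M₂ hWobs ε hε0.le hε1' with hM₂'
      have hOA1 : M₁'.obsAssign = Fintype.piFinset
          (fun p => if p ∈ G.obs then CausalGraph.domE W B M₁ p else ({0} : Finset ℕ)) := rfl
      have hOA2 : M₂'.obsAssign = M₁'.obsAssign := by
        apply CausalGraph.SEM.obsAssign_congr
        intro i hi
        rw [hM₂', hM₁', CausalGraph.extend_dom, CausalGraph.extend_dom, hdomE i hi]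
      have hWfilter : W.filter (fun Z => Z ∈ W) = W :=
        Finset.filter_true_of_mem (fun _ hx => hx)
      have hmem_of : ∀ v ∈ M₁'.obsAssign, ∀ p, v p ∈
          (if p ∈ G.obs then CausalGraph.domE W B M₁ p else ({0} : Finset ℕ)) := by
        intro v hv
        rw [hOA1, Fintype.mem_piFinset] at hv
        exact hv
      have hmem_of2 : ∀ v ∈ M₁'.obsAssign, ∀ p, v p ∈
          (if p ∈ G.obs then CausalGraph.domE W B M₂ p else ({0} : Finset ℕ)) := by
        intro v hv p
        have h := hmem_of v hv p
        by_cases hp : p ∈ G.obs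
        · rw [if_pos hp] at h ⊢
          rwa [hdomE p hp] at h
        · rw [if_neg hp] at h ⊢
          exact h
      have hPx : ∀ (M : G.SEM) (hM : M.positive) (hd : ∀ p ∈ G.obs,
            CausalGraph.domE W B M₁ p = CausalGraph.domE W B M p)
          (hmm : ∀ v ∈ M₁'.obsAssign, ∀ p, v p ∈
            (if p ∈ G.obs then CausalGraph.domE W B M p else ({0} : Finset ℕ))),
          (CausalGraph.extend G W B M hWobs ε hε0.le hε1').Px (G.obs \ W) x Y v'₀ = f M ε := by
        intro M hM hd hmm
        set M' := CausalGraph.extend G W B M hWobs ε hε0.le hε1' with hM'def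
        have hOA : M'.obsAssign = M₁'.obsAssign := by
          apply CausalGraph.SEM.obsAssign_congr
          intro i hi
          rw [hM'def, hM₁', CausalGraph.extend_dom, CausalGraph.extend_dom, hd i hi]
        rw [CausalGraph.SEM.Px, hOA, hf]
        rw [hOA1]
        apply Finset.sum_congr rfl
        intro v hv
        rcases Finset.mem_filter.mp hv with ⟨hvmem, _⟩
        have hv' : ∀ p, v p ∈
            (if p ∈ G.obs then CausalGraph.domE W B M p else ({0} : Finset ℕ)) := by
          apply hmm
          rw [hOA1]
          exact hvmem
        rw [hXW, hM'def, CausalGraph.Q_extend G W B M hWobs ε hε0.le hε1' W v hv', hWfilter]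
      have h1 := hPx M₁ hpos₁ (fun p _ => rfl) hmem_of
      have h2 := hPx M₂ hpos₂ hdomE hmem_of2
      rw [← h1, ← h2]
      apply H M₁' M₂'
        (CausalGraph.extend_positive G W B M₁ hpos₁ hWobs hε0 hε1')
        (CausalGraph.extend_positive G W B M₂ hpos₂ hWobs hε0 hε1')
      · intro i hi
        rw [hM₁', hM₂', CausalGraph.extend_dom, CausalGraph.extend_dom, hdomE i hi]
      · intro A hA v hv
        have hv1 := hmem_of v hv
        have hv2 := hmem_of2 v hv
        rw [hM₁', hM₂', CausalGraph.Q_extend G W B M₁ hWobs ε hε0.le hε1' A v hv1,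
          CausalGraph.Q_extend G W B M₂ hWobs ε hε0.le hε1' A v hv2]
        congr 1
        exact hQ A hA _ (CausalGraph.opv_mem_obsAssign hWobs hv1)
      · intro i hi
        have hiW : i ∉ W := (Finset.mem_sdiff.mp hi).2
        rw [hM₁', CausalGraph.extend_dom, CausalGraph.domE, if_neg hiW]
        exact hx i hi
      · intro i hi
        have h := hv'mem1 i
        rw [if_pos (hWobs (hYsubW hi))] at h
        rw [hM₁', CausalGraph.extend_dom]
        exact h
    -- Step 2: continuity
    have hcont : ∀ M : G.SEM, Continuous (f M) := by
      intro M
      apply continuous_finset_sum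
      intro v' _
      apply Continuous.mul ?_ continuous_const
      apply continuous_finset_prod
      intro Z _
      simp only [CausalGraph.pOnoise]
      fun_prop
    -- Step 3: value at 0
    have hsingle : T.filter (fun v' => ∀ Z ∈ W,
        (Nat.unpair (v' Z)).2 = CausalGraph.encodeL W.toList (CausalGraph.Fm G W B Z v'))
        = {v'₀} := by
      ext v'
      simp only [Finset.mem_filter, Finset.mem_singleton]
      constructor
      · rintro ⟨hvT, hcons⟩
        rcases Finset.mem_filter.mp hvT with ⟨hvmem, hvx, hvy⟩
        exact CausalGraph.cons_unique G W B Y hWobs hYsubW hpath x w hBbound hwB v'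
          (Fintype.mem_piFinset.mp hvmem) hvx hvy hcons
      · rintro rfl
        refine ⟨Finset.mem_filter.mpr ⟨Fintype.mem_piFinset.mpr hv'mem1, ?_, fun i _ => rfl⟩,
          CausalGraph.vstar_cons G W B x w hwB⟩
        intro i hi
        rcases Finset.mem_sdiff.mp hi with ⟨hio, hiW⟩
        rw [hv0, CausalGraph.vstar, if_neg hiW, if_pos hio]
    have hopv0 : CausalGraph.opv W v'₀ = v₀ := by
      rw [hv0, CausalGraph.opv_vstar, hv₀def]
    have hf0 : ∀ M : G.SEM, f M 0 = M.Q W v₀ := by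
      intro M
      rw [hf]
      dsimp only
      have hterm : ∀ v' ∈ T,
          (∏ Z ∈ W, CausalGraph.pOnoise G W B 0 Z (v' Z) v') * M.Q W (CausalGraph.opv W v')
          = if (∀ Z ∈ W, (Nat.unpair (v' Z)).2
              = CausalGraph.encodeL W.toList (CausalGraph.Fm G W B Z v'))
            then M.Q W (CausalGraph.opv W v') else 0 := by
        intro v' _
        have hnoise : ∀ Z, CausalGraph.pOnoise G W B 0 Z (v' Z) v'
            = if (Nat.unpair (v' Z)).2
                = CausalGraph.encodeL W.toList (CausalGraph.Fm G W B Z v')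
              then 1 else 0 := by
          intro Z
          rw [CausalGraph.pOnoise]
          simp
        rw [Finset.prod_congr rfl (fun Z _ => hnoise Z), Finset.prod_boole]
        split <;> simp
      rw [Finset.sum_congr rfl hterm, ← Finset.sum_filter, hsingle, Finset.sum_singleton,
        hopv0]
    -- Step 4: combine
    have h00 : f M₁ 0 = f M₂ 0 := by
      have hcl := hstep1.closure (hcont M₁) (hcont M₂)
      have h0mem : (0:ℝ) ∈ closure (Set.Ioo (0:ℝ) 1) := by
        rw [closure_Ioo (by norm_num : (0:ℝ) ≠ 1)]
        exact ⟨le_refl 0, by norm_num⟩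
      exact hcl h0mem
    have hx2 : ∀ i ∈ G.obs \ W, x i ∈ M₂.dom i := by
      intro i hi
      rw [← hdom i (Finset.mem_sdiff.mp hi).1]
      exact hx i hi
    have hw2 : ∀ i ∈ W, w i ∈ M₂.dom i := by
      intro i hi
      rw [← hdom i (hWobs hi)]
      exact hw i hi
    rw [CausalGraph.SEM.Px_eq_Q M₁ W hWobs x w hx hw,
      CausalGraph.SEM.Px_eq_Q M₂ W hWobs x w hx2 hw2]
    calc M₁.Q W v₀ = f M₁ 0 := (hf0 M₁).symm
    _ = f M₂ 0 := h00
    _ = M₂.Q W v₀ := hf0 M₂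
  · -- (⇐) `Q[W]` g-identifiable implies effect on `Y` g-identifiable
    intro hQW
    intro M₁ M₂ hpos₁ hpos₂ hdom hQ x y hx hy
    rw [CausalGraph.SEM.Px, CausalGraph.SEM.Px,
      CausalGraph.SEM.obsAssign_congr M₂ M₁ (fun i hi => (hdom i hi).symm)]
    apply Finset.sum_congr rfl
    intro v hv
    rcases Finset.mem_filter.mp hv with ⟨hvmem, _⟩
    have hvals : ∀ i, i ∈ G.obs → v i ∈ M₁.dom i := by
      intro i hi
      have h := Fintype.mem_piFinset.mp hvmem i
      rwa [if_pos hi] at h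
    have hvals0 : ∀ i, i ∉ G.obs → v i = 0 := by
      intro i hi
      have h := Fintype.mem_piFinset.mp hvmem i
      rw [if_neg hi] at h
      simpa using h
    have h1 := hQW M₁ M₂ hpos₁ hpos₂ hdom hQ v v
      (fun i hi => hvals i (Finset.mem_sdiff.mp hi).1)
      (fun i hi => hvals i (hWobs hi))
    have hvals2 : ∀ i ∈ G.obs \ W, v i ∈ M₂.dom i := by
      intro i hi
      rw [← hdom i (Finset.mem_sdiff.mp hi).1]
      exact hvals i (Finset.mem_sdiff.mp hi).1
    have hvals2' : ∀ i ∈ W, v i ∈ M₂.dom i := by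
      intro i hi
      rw [← hdom i (hWobs hi)]
      exact hvals i (hWobs hi)
    rw [CausalGraph.SEM.Px_eq_Q M₁ W hWobs v v
        (fun i hi => hvals i (Finset.mem_sdiff.mp hi).1) (fun i hi => hvals i (hWobs hi)),
      CausalGraph.SEM.Px_eq_Q M₂ W hWobs v v hvals2 hvals2'] at h1
    have hveq : (fun p => if p ∈ W then v p else if p ∈ G.obs then v p else 0) = v := by
      funext p
      by_cases hpW : p ∈ W
      · simp [hpW]
      · by_cases hpo : p ∈ G.obs
        · simp [hpW, hpo]
        · simp [hpW, hpo, (hvals0 p hpo).symm]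
    rw [hveq] at h1
    rw [hXW]
    exact h1
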